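/- Let K be a field, A an n×n matrix over K, and w = w_1 w_2 ⋯ w_m a word over {1, …, n} in which every index of {1, …, n} appears at least once. Define the m×m matrix C, with rows and columns indexed by the positions 1, …, m of the word, by C_{pq} = (A − I)_{w_p, w_q} if p > q and C_{pq} = 0 otherwise. Then I − C is invertible and F_{w_m}(A)·F_{w_{m−1}}(A)⋯F_{w_1}(A) = I + ^c((I − C)^{−1})·(A − I), where for an m×m matrix M the compression ^c(M) is the n×n matrix with (i,k)-entry [^c(M)]_{ik} = Σ_{p : w_p = i} Σ_{q : w_q = k} M_{pq}. -/

import Mathlib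

open Matrix Finset

/-- `sdsF A i` is the matrix that agrees with the identity matrix in every row except
row `i`, whose `i`-th row equals the `i`-th row of `A`. -/
def sdsF {K : Type*} [Field K] {n : ℕ} (A : Matrix (Fin n) (Fin n) K) (i : Fin n) :
    Matrix (Fin n) (Fin n) K :=
  Matrix.of fun k j => if k = i then A k j else if k = j then 1 else 0

/-- The map of the linear SDS with local matrix `A` and word update schedule
`w = w₁ w₂ ⋯ w_m` (`w₁` updated first): the product `F_{w_m}(A) ⋯ F_{w_1}(A)`. -/
def wordMap {K : Type*} [Field K] {n m : ℕ} (A : Matrix (Fin n) (Fin n) K)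
    (w : Fin m → Fin n) : Matrix (Fin n) (Fin n) K :=
  (((List.finRange m).reverse).map fun p => sdsF A (w p)).prod

/-- The `m×m` matrix `C` indexed by the positions of the word `w`, with
`C p q = (A − I) (w p) (w q)` if `p > q` and `0` otherwise. -/
def wordC {K : Type*} [Field K] {n m : ℕ} (A : Matrix (Fin n) (Fin n) K)
    (w : Fin m → Fin n) : Matrix (Fin m) (Fin m) K :=
  Matrix.of fun p q => if q < p then (A - 1) (w p) (w q) else 0

/-- Block-compression with respect to the word `w`: for an `m×m` matrix `M`,
`[^c(M)]_{ik} = Σ_{p : w p = i} Σ_{q : w q = k} M p q`. -/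
def wordComp {K : Type*} [Field K] {n m : ℕ} (w : Fin m → Fin n)
    (M : Matrix (Fin m) (Fin m) K) : Matrix (Fin n) (Fin n) K :=
  Matrix.of fun i k => ∑ p : Fin m, ∑ q : Fin m, if w p = i ∧ w q = k then M p q else 0

private lemma stdMul {K : Type*} [Semiring K] {a b c : ℕ} (i : Fin a) (j : Fin b)
    (M : Matrix (Fin b) (Fin c) K) (r : Fin a) (s : Fin c) :
    (Matrix.single i j (1 : K) * M) r s = if r = i then M j s else 0 := by
  by_cases h : r = i
  · subst h
    simp [Matrix.mul_apply, Matrix.single, ite_and]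
  · simp only [Matrix.mul_apply, Matrix.single, Matrix.of_apply, if_neg h]
    refine Finset.sum_eq_zero fun t _ => ?_
    rw [if_neg (fun hc => h hc.1.symm), zero_mul]

/-- **Theorem (closed formula for linear SDS over words).**
Let `w = w₁ ⋯ w_m` be a word over `{1, …, n}` containing every index at least once.
Then `I − C` is invertible and
`F_{w_m}(A) ⋯ F_{w_1}(A) = I + ^c((I − C)⁻¹) · (A − I)`. -/
theorem linear_sds_word_closed_formula {K : Type*} [Field K] {n m : ℕ}
    (A : Matrix (Fin n) (Fin n) K) (w : Fin m → Fin n)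
    (hw : Function.Surjective w) :
    IsUnit (1 - wordC A w) ∧
      wordMap A w = 1 + wordComp w ((1 - wordC A w)⁻¹) * (A - 1) := by
  classical
  set B : Matrix (Fin n) (Fin n) K := A - 1 with hBdef
  set C : Matrix (Fin m) (Fin m) K := wordC A w with hCdef
  have hdet : (1 - C).det = 1 := by
    rw [Matrix.det_of_lowerTriangular]
    · refine Finset.prod_eq_one fun p _ => ?_
      simp [hCdef, wordC, Matrix.sub_apply, Matrix.one_apply]
    · intro p q h
      have hpq : p < q := h
      simp [hCdef, wordC, Matrix.sub_apply, Matrix.one_apply, hpq.ne, hpq.asymm]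
  have hdetU : IsUnit (1 - C).det := by rw [hdet]; exact isUnit_one
  have hUnit : IsUnit (1 - C) := (Matrix.isUnit_iff_isUnit_det _).2 hdetU
  refine ⟨hUnit, ?_⟩
  set N : Matrix (Fin m) (Fin m) K := (1 - C)⁻¹ with hNdef
  set V : Matrix (Fin m) (Fin n) K := Matrix.of (fun p j => B (w p) j) with hVdef
  set X : Matrix (Fin m) (Fin n) K := N * V with hXdef
  have hNX : (1 - C) * X = V := by
    rw [hXdef, ← Matrix.mul_assoc, Matrix.mul_nonsing_inv _ hdetU, Matrix.one_mul]
  have hX2 : X = V + C * X := by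
    have h : X - C * X = V := by rw [← hNX, Matrix.sub_mul, Matrix.one_mul]
    exact eq_add_of_sub_eq h
  set Uf : ℕ → Matrix (Fin n) (Fin m) K :=
    fun k => Matrix.of fun i p => if (p : ℕ) < k ∧ w p = i then 1 else 0 with hUfdef
  set Gf : ℕ → Matrix (Fin n) (Fin n) K :=
    fun k => (((List.finRange m).take k).reverse.map fun p => sdsF A (w p)).prod with hGfdef
  have key : ∀ k, k ≤ m → Gf k = 1 + Uf k * X := by
    intro k
    induction k with
    | zero =>
      intro _
      have h0 : Uf 0 * X = 0 := by
        ext i j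
        simp [hUfdef, Matrix.mul_apply]
      simp [hGfdef, h0]
    | succ k ih =>
      intro hk1
      have hkm : k < m := hk1
      have htake : (List.finRange m).take (k + 1)
          = (List.finRange m).take k ++ [⟨k, hkm⟩] := by
        rw [List.take_succ]
        congr 1
        rw [List.getElem?_eq_getElem (by simpa using hkm)]
        simp
      have hstep : Gf (k + 1) = sdsF A (w ⟨k, hkm⟩) * Gf k := by
        simp only [hGfdef]
        rw [htake, List.reverse_append, List.map_append, List.prod_append]
        simp
      set i0 : Fin n := w ⟨k, hkm⟩ with hi0
      set Ek : Matrix (Fin n) (Fin m) K := Matrix.single i0 ⟨k, hkm⟩ 1 with hEk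
      have hF : sdsF A i0 = 1 + Matrix.single i0 i0 1 * B := by
        ext a j
        rw [Matrix.add_apply, stdMul]
        by_cases ha : a = i0
        · subst ha
          simp [sdsF, hBdef, Matrix.sub_apply, Matrix.one_apply]
        · simp [sdsF, ha, Matrix.one_apply]
      have hU : Uf (k + 1) = Uf k + Ek := by
        ext i p
        by_cases hp : p = ⟨k, hkm⟩
        · subst hp
          by_cases hi : i = i0
          · subst hi
            simp [hUfdef, hEk, Matrix.single, hi0]
          · have h3 : ¬ w ⟨k, hkm⟩ = i := fun h => hi (by rw [hi0, h])
            have h4 : ¬ i0 = i := fun h => hi h.symm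
            simp [hUfdef, hEk, Matrix.single, h3, h4]
        · have hpk : (p : ℕ) ≠ k := fun h => hp (Fin.ext h)
          have hiff : ((p : ℕ) < k + 1 ∧ w p = i) ↔ ((p : ℕ) < k ∧ w p = i) := by
            constructor
            · rintro ⟨h1, h2⟩; exact ⟨lt_of_le_of_ne (Nat.lt_succ_iff.mp h1) hpk, h2⟩
            · rintro ⟨h1, h2⟩; exact ⟨h1.trans (Nat.lt_succ_self k), h2⟩
          have h2 : ¬((⟨k, hkm⟩ : Fin m) = p) := fun h => hp h.symm
          simp [hUfdef, hEk, Matrix.single, hiff, h2, Nat.le_iff_lt_or_eq, hpk]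
      have hrowC : ∀ q, (B * Uf k) i0 q = C ⟨k, hkm⟩ q := by
        intro q
        have h1 : (B * Uf k) i0 q
            = ∑ s, B i0 s * (if (q : ℕ) < k ∧ w q = s then 1 else 0) := by
          simp [Matrix.mul_apply, hUfdef]
        rw [h1]
        by_cases hq : (q : ℕ) < k
        · have hq' : q < (⟨k, hkm⟩ : Fin m) := hq
          rw [Finset.sum_eq_single (w q)]
          · simp [hq, hCdef, wordC, hq', hi0, hBdef]
          · intro s _ hs
            rw [if_neg (fun h => hs h.2.symm), mul_zero]
          · simp
        · have hq' : ¬ q < (⟨k, hkm⟩ : Fin m) := hq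
          simp [hq, hCdef, wordC, hq']
      have hEkX : Ek * X = Matrix.single i0 i0 1 * (B + B * (Uf k * X)) := by
        ext a j
        rw [hEk, stdMul, stdMul]
        by_cases ha : a = i0
        · rw [if_pos ha, if_pos ha]
          have h1 : X ⟨k, hkm⟩ j = V ⟨k, hkm⟩ j + (C * X) ⟨k, hkm⟩ j := by
            rw [← Matrix.add_apply, ← hX2]
          have h2b : (B * (Uf k * X)) i0 j = ∑ q, (B * Uf k) i0 q * X q j := by
            conv_lhs => rw [← Matrix.mul_assoc]
            exact Matrix.mul_apply
          have h2 : (C * X) ⟨k, hkm⟩ j = (B * (Uf k * X)) i0 j := by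
            rw [h2b, Matrix.mul_apply]
            exact Finset.sum_congr rfl fun q _ => by rw [hrowC]
          rw [h1, h2, hVdef]
          simp [Matrix.add_apply, hi0]
        · rw [if_neg ha, if_neg ha]
      rw [hstep, ih (le_of_lt hkm), hF, hU]
      conv_rhs => rw [Matrix.add_mul, hEkX]
      noncomm_ring
  have hGm : wordMap A w = Gf m := by
    simp only [wordMap, hGfdef]
    rw [List.take_of_length_le (by simp)]
  have hUm : wordComp w N * B = Uf m * X := by
    ext i j
    rw [Matrix.mul_apply, Matrix.mul_apply]
    have hXpj : ∀ p, X p j = ∑ q, N p q * B (w q) j := by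
      intro p
      rw [hXdef, Matrix.mul_apply]
      rfl
    calc ∑ k', wordComp w N i k' * B k' j
        = ∑ k', ∑ p, ∑ q, (if w p = i ∧ w q = k' then N p q else 0) * B k' j := by
          refine Finset.sum_congr rfl fun k' _ => ?_
          simp only [wordComp, Matrix.of_apply]
          rw [Finset.sum_mul]
          exact Finset.sum_congr rfl fun p _ => Finset.sum_mul _ _ _
      _ = ∑ p, ∑ q, ∑ k', (if w p = i ∧ w q = k' then N p q else 0) * B k' j := by
          rw [Finset.sum_comm]
          exact Finset.sum_congr rfl fun p _ => Finset.sum_comm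
      _ = ∑ p, ∑ q, (if w p = i then N p q * B (w q) j else 0) := by
          refine Finset.sum_congr rfl fun p _ => Finset.sum_congr rfl fun q _ => ?_
          by_cases hwp : w p = i
          · simp only [hwp, true_and, if_pos]
            rw [Finset.sum_eq_single (w q)]
            · simp
            · intro k' _ hk'
              rw [if_neg (fun h => hk' h.symm), zero_mul]
            · simp
          · simp [hwp]
      _ = ∑ p, Uf m i p * X p j := by
          refine Finset.sum_congr rfl fun p _ => ?_
          rw [hXpj]
          simp only [hUfdef, Matrix.of_apply, p.isLt, true_and]
          by_cases hwp : w p = i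
          · simp [hwp, Finset.mul_sum]
          · simp [hwp]
  rw [hGm, key m le_rfl, hUm]
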